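/- The series f(z) := Σ_{l ∈ ℤ³\{0}} (l₁² + l₂² + l₃²)^{−(3+2z)/2} converges for every real z > 0, and lim_{z→0⁺} z·f(z) = 2π. (This is the residue at z = 0 of the Epstein zeta function z ↦ Σ_{l≠0} |l|^{−3−2z} of the lattice ℤ³, which gives the value of the noncommutative residue τ₀ entering the Chern–Simons action on the noncommutative 3-torus.) -/

import Mathlib

/-!
The Epstein zeta series f(z) = Σ_{l ∈ ℤ³\{0}} (l₁²+l₂²+l₃²)^{-(3+2z)/2} converges
for every real z > 0 and lim_{z→0⁺} z·f(z) = 2π.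
-/

open scoped BigOperators

/-- The summand of the Epstein zeta function of the lattice ℤ³:
`|l|^{-(3+2z)}` written as `(l₁²+l₂²+l₃²)^{-(3+2z)/2}`. -/
noncomputable def epsteinSummand (z : ℝ) (l : {l : Fin 3 → ℤ // l ≠ 0}) : ℝ :=
  (∑ i : Fin 3, ((l.1 i : ℝ)) ^ 2) ^ (-(3 + 2 * z) / 2)

/-- The Epstein zeta function `f(z) = Σ_{l ≠ 0} |l|^{-3-2z}` of the lattice ℤ³. -/
noncomputable def epsteinZeta (z : ℝ) : ℝ :=
  ∑' l : {l : Fin 3 → ℤ // l ≠ 0}, epsteinSummand z l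

open MeasureTheory Set Metric Filter Real

namespace EpsteinAux


noncomputable def latE (l : Fin 3 → ℤ) : EuclideanSpace ℝ (Fin 3) := WithLp.toLp 2 (fun i => (l i : ℝ))

lemma norm_latE (l : Fin 3 → ℤ) :
    ‖latE l‖ = Real.sqrt (∑ i : Fin 3, ((l i : ℝ)) ^ 2) := by
  rw [EuclideanSpace.norm_eq]
  congr 1
  refine Finset.sum_congr rfl fun i _ => ?_
  rw [Real.norm_eq_abs, sq_abs]
  rfl

lemma one_le_S {l : Fin 3 → ℤ} (hl : l ≠ 0) : (1:ℝ) ≤ ∑ i : Fin 3, ((l i : ℝ)) ^ 2 := by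
  obtain ⟨i, hi⟩ := Function.ne_iff.mp hl
  have h1 : (1:ℝ) ≤ ((l i : ℝ)) ^ 2 := by
    have h2 : 1 ≤ |l i| := Int.one_le_abs (by simpa using hi)
    have h3 : (1:ℝ) ≤ |(l i : ℝ)| := by
      rw [← Int.cast_abs]; exact_mod_cast h2
    nlinarith [sq_abs ((l i : ℝ))]
  calc (1:ℝ) ≤ ((l i : ℝ)) ^ 2 := h1
    _ ≤ ∑ j : Fin 3, ((l j : ℝ)) ^ 2 :=
      Finset.single_le_sum (f := fun j => ((l j : ℝ)) ^ 2) (fun j _ => sq_nonneg _) (Finset.mem_univ i)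

lemma one_le_norm_latE {l : Fin 3 → ℤ} (hl : l ≠ 0) : (1:ℝ) ≤ ‖latE l‖ := by
  rw [norm_latE]
  have := one_le_S hl
  nlinarith [Real.sq_sqrt (by positivity : (0:ℝ) ≤ ∑ i : Fin 3, ((l i : ℝ)) ^ 2),
    Real.sqrt_nonneg (∑ i : Fin 3, ((l i : ℝ)) ^ 2)]




noncomputable def epsteinSummand' (z : ℝ) (l : Fin 3 → ℤ) : ℝ :=
  (∑ i : Fin 3, ((l i : ℝ)) ^ 2) ^ (-(3 + 2 * z) / 2)

lemma summand_eq (z : ℝ) (l : Fin 3 → ℤ) :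
    epsteinSummand' z l = ‖latE l‖ ^ (-(3 + 2 * z)) := by
  have hS : (0:ℝ) ≤ ∑ i : Fin 3, ((l i : ℝ)) ^ 2 := by positivity
  rw [norm_latE, Real.sqrt_eq_rpow, ← Real.rpow_mul hS]
  unfold epsteinSummand'
  congr 1
  ring

/-- the half-open unit cube centered at the lattice point `l` -/
def cube (l : Fin 3 → ℤ) : Set (EuclideanSpace ℝ (Fin 3)) :=
  {x | ∀ i, x i ∈ Ico ((l i : ℝ) - 1/2) ((l i : ℝ) + 1/2)}

lemma mem_cube_iff {x : EuclideanSpace ℝ (Fin 3)} {l : Fin 3 → ℤ} :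
    x ∈ cube l ↔ ∀ i, ⌊x i + 1/2⌋ = l i := by
  unfold cube
  refine forall_congr' fun i => ?_
  rw [Int.floor_eq_iff, mem_Ico]
  constructor <;> intro h <;> constructor <;> push_cast <;> linarith [h.1, h.2]

lemma cube_eq_preimage (l : Fin 3 → ℤ) :
    cube l = (MeasurableEquiv.toLp 2 (Fin 3 → ℝ)).symm ⁻¹'
      (Set.univ.pi fun i => Ico ((l i : ℝ) - 1/2) ((l i : ℝ) + 1/2)) := by
  ext x
  simp [cube]

lemma cube_measurable (l : Fin 3 → ℤ) : MeasurableSet (cube l) := by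
  rw [cube_eq_preimage]
  exact (MeasurableSet.univ_pi fun i => measurableSet_Ico).preimage
    (MeasurableEquiv.toLp 2 (Fin 3 → ℝ)).symm.measurable

lemma volume_cube (l : Fin 3 → ℤ) : volume (cube l) = 1 := by
  rw [cube_eq_preimage,
    (EuclideanSpace.volume_preserving_symm_measurableEquiv_toLp (Fin 3)).measure_preimage
      ((MeasurableSet.univ_pi fun i => measurableSet_Ico).nullMeasurableSet)]
  rw [volume_pi_pi]
  simp [Real.volume_Ico]
  norm_num

lemma cube_disjoint : Pairwise (Function.onFun Disjoint cube) := by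
  intro l l' h
  refine Set.disjoint_left.mpr fun x hx hx' => h ?_
  funext i
  rw [← (mem_cube_iff.mp hx) i, ← (mem_cube_iff.mp hx') i]

lemma cube_iUnion : (⋃ l : Fin 3 → ℤ, cube l) = univ := by
  refine eq_univ_of_forall fun x => mem_iUnion.mpr ⟨fun i => ⌊x i + 1/2⌋, ?_⟩
  rw [mem_cube_iff]
  intro i; rfl

lemma cube_iUnion_ne :
    (⋃ l : {l : Fin 3 → ℤ // l ≠ 0}, cube l.1) = (cube 0)ᶜ := by
  apply Set.eq_of_subset_of_subset
  · refine iUnion_subset fun l => ?_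
    intro x hx hx0
    exact l.2 (funext fun i => by rw [← (mem_cube_iff.mp hx) i, (mem_cube_iff.mp hx0) i])
  · intro x hx
    refine mem_iUnion.mpr ⟨⟨fun i => ⌊x i + 1/2⌋, fun h0 => hx ?_⟩, mem_cube_iff.mpr fun i => rfl⟩
    rw [mem_cube_iff]
    intro i
    have := congrFun h0 i
    simpa using this

lemma dist_le_of_mem_cube {x : EuclideanSpace ℝ (Fin 3)} {l : Fin 3 → ℤ}
    (h : x ∈ cube l) : dist x (latE l) ≤ 1 := by
  rw [EuclideanSpace.dist_eq]
  have hb : ∀ i, dist (x i) ((latE l) i) ^ 2 ≤ (1/2)^2 := by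
    intro i
    have hi := h i
    rw [mem_Ico] at hi
    rw [Real.dist_eq]
    have hlat : (latE l) i = (l i : ℝ) := rfl
    have : |x i - (latE l) i| ≤ 1/2 := by
      rw [abs_le, hlat]
      constructor <;> [linarith [hi.1]; linarith [hi.2]]
    nlinarith [abs_nonneg (x i - (latE l) i)]
  have hsum : (∑ i : Fin 3, dist (x i) ((latE l) i) ^ 2) ≤ 3/4 := by
    calc (∑ i : Fin 3, dist (x i) ((latE l) i) ^ 2) ≤ ∑ i : Fin 3, ((1:ℝ)/2)^2 :=
        Finset.sum_le_sum fun i _ => hb i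
      _ = 3/4 := by norm_num
  calc Real.sqrt (∑ i : Fin 3, dist (x i) ((latE l) i) ^ 2) ≤ Real.sqrt (3/4) :=
      Real.sqrt_le_sqrt hsum
    _ ≤ Real.sqrt 1 := Real.sqrt_le_sqrt (by norm_num)
    _ = 1 := Real.sqrt_one



lemma ball_vol : (volume (ball (0 : EuclideanSpace ℝ (Fin 3)) 1)).toReal = π * (4/3) := by
  rw [EuclideanSpace.volume_ball]
  have hcard : Fintype.card (Fin 3) = 3 := by simp
  rw [hcard]
  have hG : Real.Gamma ((3:ℕ) / 2 + 1) = 3/4 * Real.sqrt π := by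
    push_cast
    rw [Real.Gamma_add_one (by norm_num)]
    have h32 : (3:ℝ)/2 = 1/2 + 1 := by norm_num
    rw [h32, Real.Gamma_add_one (by norm_num), Real.Gamma_one_half_eq]
    ring
  rw [hG]
  have hs : Real.sqrt π ^ 3 = π * Real.sqrt π := by
    rw [pow_succ, sq, Real.mul_self_sqrt Real.pi_pos.le]
  rw [hs]
  have hsne : Real.sqrt π ≠ 0 := by positivity
  rw [ENNReal.ofReal_one, one_pow, one_mul, ENNReal.toReal_ofReal (by positivity)]
  field_simp

lemma radial_eq (f : ℝ → ℝ) :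
    (∫ x : EuclideanSpace ℝ (Fin 3), f ‖x‖) = (4*π) * ∫ r in Ioi (0:ℝ), r^2 * f r := by
  rw [MeasureTheory.integral_fun_norm_addHaar volume f]
  have hdim : Module.finrank ℝ (EuclideanSpace ℝ (Fin 3)) = 3 := finrank_euclideanSpace_fin
  rw [hdim, measureReal_def, ball_vol]
  simp only [smul_eq_mul, nsmul_eq_mul]
  have : ∀ r : ℝ, r ^ (3-1) * f r = r^2 * f r := fun r => by norm_num
  rw [show (∫ y in Ioi (0:ℝ), y ^ (3-1) * f y) = ∫ y in Ioi (0:ℝ), y^2 * f y from by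
    refine setIntegral_congr_fun measurableSet_Ioi fun y _ => this y]
  push_cast
  ring



noncomputable def Gr (z : ℝ) (r : ℝ) : ℝ := (1 + r) ^ (-(3 + 2*z))
noncomputable def gr (z : ℝ) (r : ℝ) : ℝ := (max (r - 1) 1) ^ (-(3 + 2*z))

lemma pointA {z r : ℝ} (hz : 0 < z) (hr : 1 ≤ r) :
    r ^ (-1 - 2*z) - (3 + 2*z) * r ^ (-2 - 2*z) ≤ r^2 * Gr z r := by
  set s : ℝ := 3 + 2*z with hs
  have hr0 : (0:ℝ) < r := by linarith
  have hr1 : (0:ℝ) < 1 + r := by linarith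
  set a : ℝ := r ^ s with ha'
  set b : ℝ := (1 + r) ^ s with hb'
  have ha : 0 < a := Real.rpow_pos_of_pos hr0 s
  have hb : 0 < b := Real.rpow_pos_of_pos hr1 s
  have hs1 : (1:ℝ) ≤ s := by simp only [hs]; linarith
  have hBer := one_add_mul_self_le_rpow_one_add
    (s := -1/(1+r)) (by rw [neg_div, neg_le_neg_iff]; rw [div_le_one hr1]; linarith) hs1
  have h1r : (1 : ℝ) + (-1/(1+r)) = r/(1+r) := by field_simp; ring
  rw [h1r] at hBer
  have hdiv : (r/(1+r)) ^ s = a / b := Real.div_rpow hr0.le hr1.le s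
  rw [hdiv] at hBer
  have hmono : 1 - s/r ≤ 1 + s * (-1/(1+r)) := by
    have h0 : s/(1+r) ≤ s/r :=
      div_le_div_of_nonneg_left (by linarith) hr0 (by linarith)
    have h1 : s * (-1/(1+r)) = -(s/(1+r)) := by ring
    linarith [h0, h1.le, h1.ge]
  have h : 1 - s/r ≤ a/b := le_trans hmono hBer
  have h5 : (1 - s/r) * b ≤ a := (le_div_iff₀ hb).mp h
  have h6 := mul_le_mul_of_nonneg_left h5 hr0.le
  have h7 : r * ((1 - s/r) * b) = (r - s) * b := by field_simp <;> ring
  have key : (r - s) * b ≤ r * a := by rw [← h7]; exact h6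
  have e1 : r ^ (-1 - 2*z) = r^2 / a := by
    rw [show (-1 - 2*z) = 2 - s by rw [hs]; ring, Real.rpow_sub hr0, Real.rpow_two]
  have e2 : r ^ (-2 - 2*z) = r / a := by
    rw [show (-2 - 2*z) = 1 - s by rw [hs]; ring, Real.rpow_sub hr0, Real.rpow_one]
  have e3 : Gr z r = 1 / b := by
    rw [Gr, show -(3 + 2*z) = -s from by rw [hs], Real.rpow_neg hr1.le, one_div]
  rw [e1, e2, e3]
  rw [show r^2/a - s * (r/a) = (r^2 - s*r)/a from by ring,
    show r^2 * (1/b) = r^2/b from by ring, div_le_div_iff₀ ha hb]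
  nlinarith [mul_le_mul_of_nonneg_left key hr0.le, ha.le, hb.le]

lemma pointB {z r : ℝ} (hz : 0 < z) (hz' : z ≤ 1/2) (hr : 8 ≤ r) :
    r^2 * gr z r ≤ r ^ (-1 - 2*z) + 8 * r ^ (-2 - 2*z) := by
  set s : ℝ := 3 + 2*z with hs
  have hr0 : (0:ℝ) < r := by linarith
  have hr1 : (0:ℝ) < r - 1 := by linarith
  have hmax : max (r - 1) 1 = r - 1 := max_eq_left (by linarith)
  set a : ℝ := r ^ s with ha'
  set c : ℝ := (r - 1) ^ s with hc'
  have ha : 0 < a := Real.rpow_pos_of_pos hr0 s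
  have hc : 0 < c := Real.rpow_pos_of_pos hr1 s
  have hs1 : (1:ℝ) ≤ s := by simp only [hs]; linarith
  have hs4 : s ≤ 4 := by simp only [hs]; linarith
  have hs3 : 3 ≤ s := by simp only [hs]; linarith
  have hBer := one_add_mul_self_le_rpow_one_add
    (s := -1/r) (by rw [neg_div, neg_le_neg_iff]; rw [div_le_one hr0]; linarith) hs1
  have h1r : (1 : ℝ) + (-1/r) = (r-1)/r := by field_simp <;> ring
  rw [h1r] at hBer
  have hdiv : ((r-1)/r) ^ s = c / a := Real.div_rpow hr1.le hr0.le s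
  rw [hdiv] at hBer
  have h5 : (1 + s * (-1/r)) * a ≤ c := (le_div_iff₀ ha).mp hBer
  have h6 := mul_le_mul_of_nonneg_left h5 hr0.le
  have h7 : r * (1 + s * (-1/r)) = r - s := by field_simp <;> ring
  have h8 : r * ((1 + s * (-1/r)) * a) = (r * (1 + s * (-1/r))) * a := by ring
  rw [h7] at h8
  have key : (r - s) * a ≤ r * c := by rw [← h8]; exact h6
  have e1 : r ^ (-1 - 2*z) = r^2 / a := by
    rw [show (-1 - 2*z) = 2 - s by rw [hs]; ring, Real.rpow_sub hr0, Real.rpow_two]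
  have e2 : r ^ (-2 - 2*z) = r / a := by
    rw [show (-2 - 2*z) = 1 - s by rw [hs]; ring, Real.rpow_sub hr0, Real.rpow_one]
  have e3 : gr z r = 1 / c := by
    rw [gr, hmax, show -(3 + 2*z) = -s from by rw [hs], Real.rpow_neg hr1.le, one_div]
  rw [e1, e2, e3]
  rw [show r^2 * (1/c) = r^2/c from by ring,
    show r^2/a + 8 * (r/a) = (r^2 + 8*r)/a from by ring, div_le_div_iff₀ hc ha]
  have q1 : r^2 ≤ (r+8)*(r-s) := by nlinarith
  have q2 : r^2*a ≤ ((r+8)*(r-s))*a := mul_le_mul_of_nonneg_right q1 ha.le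
  have q3 : (r+8)*((r-s)*a) ≤ (r+8)*(r*c) := mul_le_mul_of_nonneg_left key (by linarith)
  nlinarith [q2, q3]




lemma rpow_combine {r : ℝ} (hr : 0 < r) (z : ℝ) :
    r^2 * r ^ (-(3 + 2*z)) = r ^ (-1 - 2*z) := by
  rw [← Real.rpow_two, ← Real.rpow_add hr]
  congr 1; ring

lemma contOn_G (z : ℝ) {A : Set ℝ} (hA : ∀ x ∈ A, 0 ≤ x) :
    ContinuousOn (fun r => r^2 * Gr z r) A := by
  refine (continuous_pow 2).continuousOn.mul ?_
  exact (continuous_const.add continuous_id).continuousOn.rpow_const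
    fun x hx => Or.inl (by have := hA x hx; intro h; simp at h; linarith)

lemma cont_g (z : ℝ) : Continuous (fun r => r^2 * gr z r) := by
  refine (continuous_pow 2).mul ?_
  exact ((continuous_id.sub continuous_const).max continuous_const).rpow_const
    fun x => Or.inl (by
      have h1 : (1:ℝ) ≤ max (id x - 1) 1 := le_max_right _ _
      exact (lt_of_lt_of_le one_pos (le_max_right _ _)).ne')

lemma one_le_base_g (r : ℝ) : (1:ℝ) ≤ max (r - 1) 1 := le_max_right _ _

lemma g_le_one (z r : ℝ) (hz : 0 < z) : gr z r ≤ 1 :=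
  Real.rpow_le_one_of_one_le_of_nonpos (one_le_base_g r) (by linarith)

lemma G_le_one (z r : ℝ) (hz : 0 < z) (hr : 0 ≤ r) : Gr z r ≤ 1 :=
  Real.rpow_le_one_of_one_le_of_nonpos (by linarith) (by linarith)

lemma G_nonneg (z r : ℝ) (hr : 0 ≤ r) : 0 ≤ Gr z r :=
  Real.rpow_nonneg (by linarith) _

lemma g_nonneg (z r : ℝ) : 0 ≤ gr z r :=
  Real.rpow_nonneg (by linarith [one_le_base_g r]) _

lemma integrable_radial_G {z : ℝ} (hz : 0 < z) :
    IntegrableOn (fun r => r^2 * Gr z r) (Ioi (0:ℝ)) := by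
  have h1 : IntegrableOn (fun r => r^2 * Gr z r) (Ioc (0:ℝ) 1) :=
    ((contOn_G z (fun x hx => hx.1)).integrableOn_compact isCompact_Icc).mono_set
      Ioc_subset_Icc_self
  have h2 : IntegrableOn (fun r => r^2 * Gr z r) (Ioi (1:ℝ)) := by
    refine Integrable.mono (integrableOn_Ioi_rpow_of_lt (by linarith : -1-2*z < -1) one_pos)
      ((contOn_G z (fun x hx => by simp at hx; linarith)).aestronglyMeasurable measurableSet_Ioi) ?_
    refine (ae_restrict_iff' measurableSet_Ioi).mpr (Filter.Eventually.of_forall fun r hr => ?_)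
    simp only [mem_Ioi] at hr
    have hr0 : (0:ℝ) < r := by linarith
    have hb1 : Gr z r ≤ r ^ (-(3+2*z)) := by
      apply Real.rpow_le_rpow_of_nonpos hr0 (by linarith) (by linarith)
    have hb2 : r^2 * Gr z r ≤ r ^ (-1-2*z) := by
      calc r^2 * Gr z r ≤ r^2 * r ^ (-(3+2*z)) := by
            apply mul_le_mul_of_nonneg_left hb1 (by positivity)
        _ = r ^ (-1-2*z) := rpow_combine hr0 z
    have hnn : 0 ≤ r^2 * Gr z r := mul_nonneg (by positivity) (G_nonneg z r hr0.le)
    rw [Real.norm_eq_abs, Real.norm_eq_abs, abs_of_nonneg hnn,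
      abs_of_nonneg (by positivity : (0:ℝ) ≤ r ^ (-1-2*z))]
    exact hb2
  have := h1.union h2
  rwa [Ioc_union_Ioi_eq_Ioi (by norm_num : (0:ℝ) ≤ 1)] at this

lemma integrable_radial_g {z : ℝ} (hz : 0 < z) :
    IntegrableOn (fun r => r^2 * gr z r) (Ioi (0:ℝ)) := by
  have h1 : IntegrableOn (fun r => r^2 * gr z r) (Ioc (0:ℝ) 8) :=
    ((cont_g z).continuousOn.integrableOn_compact isCompact_Icc (K := Icc 0 8)).mono_set
      Ioc_subset_Icc_self
  have h2 : IntegrableOn (fun r => r^2 * gr z r) (Ioi (8:ℝ)) := by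
    refine Integrable.mono
      ((integrableOn_Ioi_rpow_of_lt (by linarith : -1-2*z < -1)
        (by norm_num : (0:ℝ) < 8)).const_mul ((2:ℝ) ^ (3+2*z)))
      ((cont_g z).aestronglyMeasurable.restrict) ?_
    refine (ae_restrict_iff' measurableSet_Ioi).mpr (Filter.Eventually.of_forall fun r hr => ?_)
    simp only [mem_Ioi] at hr
    have hr0 : (0:ℝ) < r := by linarith
    have hm : max (r-1) 1 = r - 1 := max_eq_left (by linarith)
    have hhalf : r / 2 ≤ r - 1 := by linarith
    have hb1 : gr z r ≤ (r/2) ^ (-(3+2*z)) := by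
      rw [gr, hm]
      exact Real.rpow_le_rpow_of_nonpos (by linarith) hhalf (by linarith)
    have he : (r/2) ^ (-(3+2*z)) = (2:ℝ)^(3+2*z) * r ^ (-(3+2*z)) := by
      rw [Real.div_rpow hr0.le (by norm_num : (0:ℝ) ≤ 2),
        Real.rpow_neg (by norm_num : (0:ℝ) ≤ 2), div_inv_eq_mul, mul_comm]
    have hb2 : r^2 * gr z r ≤ (2:ℝ)^(3+2*z) * r ^ (-1-2*z) := by
      calc r^2 * gr z r ≤ r^2 * ((2:ℝ)^(3+2*z) * r ^ (-(3+2*z))) := by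
            rw [← he]; exact mul_le_mul_of_nonneg_left hb1 (by positivity)
        _ = (2:ℝ)^(3+2*z) * (r^2 * r ^ (-(3+2*z))) := by ring
        _ = (2:ℝ)^(3+2*z) * r ^ (-1-2*z) := by rw [rpow_combine hr0 z]
    have hnn : 0 ≤ r^2 * gr z r := mul_nonneg (by positivity) (g_nonneg z r)
    rw [Real.norm_eq_abs, Real.norm_eq_abs, abs_of_nonneg hnn,
      abs_of_nonneg (by positivity : (0:ℝ) ≤ (2:ℝ)^(3+2*z) * r ^ (-1-2*z))]
    exact hb2
  have := h1.union h2
  rwa [Ioc_union_Ioi_eq_Ioi (by norm_num : (0:ℝ) ≤ 8)] at this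


lemma radial_G_lower {z : ℝ} (hz : 0 < z) :
    1/(2*z) - (3+2*z)/(1+2*z) ≤ ∫ r in Ioi (0:ℝ), r^2 * Gr z r := by
  have hint : IntegrableOn (fun r => r^2 * Gr z r) (Ioi (0:ℝ)) := integrable_radial_G hz
  have int1 : IntegrableOn (fun r : ℝ => r ^ (-1-2*z)) (Ioi (1:ℝ)) :=
    integrableOn_Ioi_rpow_of_lt (by linarith) one_pos
  have int2 : IntegrableOn (fun r : ℝ => (3+2*z) * r ^ (-2-2*z)) (Ioi (1:ℝ)) :=
    (integrableOn_Ioi_rpow_of_lt (by linarith : -2-2*z < -1) one_pos).const_mul _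
  have h1 : ∫ r in Ioi (1:ℝ), r^2 * Gr z r ≤ ∫ r in Ioi (0:ℝ), r^2 * Gr z r := by
    refine setIntegral_mono_set hint ?_ (HasSubset.Subset.eventuallyLE (Ioi_subset_Ioi zero_le_one))
    refine (ae_restrict_iff' measurableSet_Ioi).mpr (Filter.Eventually.of_forall fun r hr => ?_)
    exact mul_nonneg (by positivity) (G_nonneg z r (le_of_lt hr))
  have h2 : ∫ r in Ioi (1:ℝ), (r ^ (-1-2*z) - (3+2*z) * r ^ (-2-2*z))
      ≤ ∫ r in Ioi (1:ℝ), r^2 * Gr z r := by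
    refine setIntegral_mono_on (int1.sub int2)
      (hint.mono_set (Ioi_subset_Ioi zero_le_one)) measurableSet_Ioi fun r hr => ?_
    exact pointA hz (le_of_lt hr)
  have v1 : ∫ r in Ioi (1:ℝ), r ^ (-1 - 2*z) = 1/(2*z) := by
    rw [integral_Ioi_rpow_of_lt (by linarith : -1-2*z < -1) one_pos, Real.one_rpow,
      show (-1-2*z+1) = -(2*z) by ring, neg_div_neg_eq]
  have v2 : ∫ r in Ioi (1:ℝ), r ^ (-2 - 2*z) = 1/(1+2*z) := by
    rw [integral_Ioi_rpow_of_lt (by linarith : -2-2*z < -1) one_pos, Real.one_rpow,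
      show (-2-2*z+1) = -(1+2*z) by ring, neg_div_neg_eq]
  have h3 : ∫ r in Ioi (1:ℝ), (r ^ (-1-2*z) - (3+2*z) * r ^ (-2-2*z))
      = 1/(2*z) - (3+2*z)/(1+2*z) := by
    rw [integral_sub int1 int2, MeasureTheory.integral_const_mul, v1, v2, mul_one_div]
  linarith

lemma radial_g_upper {z : ℝ} (hz : 0 < z) (hz' : z ≤ 1/2) :
    ∫ r in Ioi (0:ℝ), r^2 * gr z r ≤ 512/3 + (8:ℝ)^(-(2*z))/(2*z) + 8 := by
  have hp1 : IntegrableOn (fun r => r^2 * gr z r) (Ioc (0:ℝ) 8) :=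
    ((cont_g z).continuousOn.integrableOn_compact isCompact_Icc (K := Icc 0 8)).mono_set
      Ioc_subset_Icc_self
  have int1 : IntegrableOn (fun r : ℝ => r ^ (-1-2*z)) (Ioi (8:ℝ)) :=
    integrableOn_Ioi_rpow_of_lt (by linarith) (by norm_num)
  have int2 : IntegrableOn (fun r : ℝ => 8 * r ^ (-2-2*z)) (Ioi (8:ℝ)) :=
    (integrableOn_Ioi_rpow_of_lt (by linarith : -2-2*z < -1) (by norm_num : (0:ℝ) < 8)).const_mul _
  have hp2 : IntegrableOn (fun r => r^2 * gr z r) (Ioi (8:ℝ)) :=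
    (integrable_radial_g hz).mono_set (Ioi_subset_Ioi (by norm_num))
  have hsplit : ∫ r in Ioi (0:ℝ), r^2 * gr z r
      = (∫ r in Ioc (0:ℝ) 8, r^2 * gr z r) + ∫ r in Ioi (8:ℝ), r^2 * gr z r := by
    rw [← Ioc_union_Ioi_eq_Ioi (by norm_num : (0:ℝ) ≤ 8),
      setIntegral_union (Ioc_disjoint_Ioi le_rfl) measurableSet_Ioi hp1 hp2]
  have hb1 : (∫ r in Ioc (0:ℝ) 8, r^2 * gr z r) ≤ 512/3 := by
    have : (∫ r in Ioc (0:ℝ) 8, r^2 * gr z r) ≤ ∫ r in Ioc (0:ℝ) 8, r^2 := by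
      refine setIntegral_mono_on hp1 ((continuous_pow 2).integrableOn_Ioc) measurableSet_Ioc
        fun r hr => ?_
      have := g_le_one z r hz
      nlinarith [g_nonneg z r, sq_nonneg r]
    have hv : ∫ r in Ioc (0:ℝ) 8, r^2 = (512:ℝ)/3 := by
      rw [← intervalIntegral.integral_of_le (by norm_num : (0:ℝ) ≤ 8), integral_pow]
      norm_num
    linarith
  have hb2 : (∫ r in Ioi (8:ℝ), r^2 * gr z r) ≤ (8:ℝ)^(-(2*z))/(2*z) + 8 := by
    have hmono : (∫ r in Ioi (8:ℝ), r^2 * gr z r)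
        ≤ ∫ r in Ioi (8:ℝ), (r ^ (-1-2*z) + 8 * r ^ (-2-2*z)) := by
      refine setIntegral_mono_on hp2 (int1.add int2) measurableSet_Ioi fun r hr => ?_
      exact pointB hz hz' (le_of_lt hr)
    have v1 : ∫ r in Ioi (8:ℝ), r ^ (-1 - 2*z) = (8:ℝ) ^ (-(2*z)) / (2*z) := by
      rw [integral_Ioi_rpow_of_lt (by linarith : -1-2*z < -1) (by norm_num : (0:ℝ) < 8),
        show (-1 - 2*z + 1) = -(2*z) by ring, neg_div_neg_eq]
    have v2 : ∫ r in Ioi (8:ℝ), r ^ (-2 - 2*z) = (8:ℝ) ^ (-(1+2*z)) / (1+2*z) := by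
      rw [integral_Ioi_rpow_of_lt (by linarith : -2-2*z < -1) (by norm_num : (0:ℝ) < 8),
        show (-2 - 2*z + 1) = -(1+2*z) by ring, neg_div_neg_eq]
    have hsum : ∫ r in Ioi (8:ℝ), (r ^ (-1-2*z) + 8 * r ^ (-2-2*z))
        = (8:ℝ)^(-(2*z))/(2*z) + 8 * ((8:ℝ) ^ (-(1+2*z)) / (1+2*z)) := by
      rw [integral_add int1 int2, MeasureTheory.integral_const_mul, v1, v2]
    have hlast : 8 * ((8:ℝ) ^ (-(1+2*z)) / (1+2*z)) ≤ 8 := by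
      have hle1 : (8:ℝ) ^ (-(1+2*z)) ≤ 1 :=
        Real.rpow_le_one_of_one_le_of_nonpos (by norm_num) (by linarith)
      have hden : (1:ℝ) ≤ 1+2*z := by linarith
      have : (8:ℝ) ^ (-(1+2*z)) / (1+2*z) ≤ 1 := by
        rw [div_le_one (by linarith)]
        linarith
      linarith
    linarith
  linarith [hsplit, hb1, hb2]

lemma cont_gr (z : ℝ) : Continuous (gr z) := by
  unfold gr
  exact ((continuous_id.sub continuous_const).max continuous_const).rpow_const
    fun x => Or.inl (by
      have h1 : (1:ℝ) ≤ max (id x - 1) 1 := le_max_right _ _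
      exact (lt_of_lt_of_le one_pos (le_max_right _ _)).ne')

lemma integrable_G3 {z : ℝ} (hz : 0 < z) :
    Integrable (fun x : EuclideanSpace ℝ (Fin 3) => Gr z ‖x‖) := by
  have h : ((Module.finrank ℝ (EuclideanSpace ℝ (Fin 3)) : ℝ)) < 3 + 2*z := by
    rw [finrank_euclideanSpace_fin]; push_cast; linarith
  simpa [Gr] using integrable_one_add_norm (μ := (volume : Measure (EuclideanSpace ℝ (Fin 3)))) h

lemma gr_le_G3 {z : ℝ} (hz : 0 < z) (x : EuclideanSpace ℝ (Fin 3)) :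
    gr z ‖x‖ ≤ (3:ℝ)^(3+2*z) * Gr z ‖x‖ := by
  have hb : (1 + ‖x‖)/3 ≤ max (‖x‖ - 1) 1 := by
    rcases le_total ‖x‖ 2 with h | h
    · calc (1 + ‖x‖)/3 ≤ 1 := by linarith
        _ ≤ max (‖x‖ - 1) 1 := le_max_right _ _
    · calc (1 + ‖x‖)/3 ≤ ‖x‖ - 1 := by linarith
        _ ≤ max (‖x‖ - 1) 1 := le_max_left _ _
  have hpos : (0:ℝ) < (1 + ‖x‖)/3 := by positivity
  have h1 : gr z ‖x‖ ≤ ((1 + ‖x‖)/3) ^ (-(3+2*z)) := by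
    rw [gr]
    exact Real.rpow_le_rpow_of_nonpos hpos hb (by linarith)
  have h2 : ((1 + ‖x‖)/3) ^ (-(3+2*z)) = (3:ℝ)^(3+2*z) * (1 + ‖x‖) ^ (-(3+2*z)) := by
    rw [Real.div_rpow (by positivity) (by norm_num : (0:ℝ) ≤ 3),
      Real.rpow_neg (by norm_num : (0:ℝ) ≤ 3), div_inv_eq_mul, mul_comm]
  rw [Gr]
  calc gr z ‖x‖ ≤ ((1 + ‖x‖)/3) ^ (-(3+2*z)) := h1
    _ = (3:ℝ)^(3+2*z) * (1 + ‖x‖) ^ (-(3+2*z)) := h2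

lemma integrable_g3 {z : ℝ} (hz : 0 < z) :
    Integrable (fun x : EuclideanSpace ℝ (Fin 3) => gr z ‖x‖) := by
  refine Integrable.mono ((integrable_G3 hz).const_mul ((3:ℝ)^(3+2*z)))
    (((cont_gr z).comp continuous_norm).aestronglyMeasurable) ?_
  refine Filter.Eventually.of_forall fun x => ?_
  rw [Real.norm_eq_abs, Real.norm_eq_abs, abs_of_nonneg (g_nonneg z ‖x‖),
    abs_of_nonneg (mul_nonneg (by positivity) (G_nonneg z ‖x‖ (norm_nonneg x)))]
  exact gr_le_G3 hz x

lemma hasSum_cubes (F : EuclideanSpace ℝ (Fin 3) → ℝ) (hF : Integrable F) :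
    HasSum (fun l : {l : Fin 3 → ℤ // l ≠ 0} => ∫ x in cube l.1, F x)
      (∫ x in (cube 0)ᶜ, F x) := by
  have hd : Pairwise (Function.onFun Disjoint fun l : {l : Fin 3 → ℤ // l ≠ 0} => cube l.1) :=
    fun a b hab => cube_disjoint fun h => hab (Subtype.ext h)
  have := MeasureTheory.hasSum_integral_iUnion
    (fun l : {l : Fin 3 → ℤ // l ≠ 0} => cube_measurable l.1) hd
    (hF.integrableOn (s := ⋃ l : {l : Fin 3 → ℤ // l ≠ 0}, cube l.1))
  rwa [cube_iUnion_ne] at this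

lemma norm_latE_le {x : EuclideanSpace ℝ (Fin 3)} {l : Fin 3 → ℤ} (hx : x ∈ cube l) :
    ‖latE l‖ ≤ 1 + ‖x‖ ∧ ‖x‖ ≤ ‖latE l‖ + 1 := by
  have hd := dist_le_of_mem_cube hx
  have h := abs_norm_sub_norm_le x (latE l)
  rw [← dist_eq_norm] at h
  rw [abs_le] at h
  constructor <;> linarith [h.1, h.2]

lemma summand_eq' (z : ℝ) (l : {l : Fin 3 → ℤ // l ≠ 0}) :
    epsteinSummand z l = ‖latE l.1‖ ^ (-(3 + 2 * z)) := summand_eq z l.1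

lemma per_l_lower {z : ℝ} (hz : 0 < z) (l : {l : Fin 3 → ℤ // l ≠ 0}) :
    ∫ x in cube l.1, Gr z ‖x‖ ≤ epsteinSummand z l := by
  have hlat : (0:ℝ) < ‖latE l.1‖ := lt_of_lt_of_le one_pos (one_le_norm_latE l.2)
  have hvol : volume (cube l.1) = 1 := volume_cube l.1
  have hconst : IntegrableOn (fun _ : EuclideanSpace ℝ (Fin 3) => ‖latE l.1‖ ^ (-(3+2*z)))
      (cube l.1) := by
    refine (integrableOn_const_iff).mpr (Or.inr ?_)
    rw [hvol]; exact ENNReal.one_lt_top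
  have h := setIntegral_mono_on ((integrable_G3 hz).integrableOn) hconst (cube_measurable l.1)
    (fun x hx => by
      have hle := (norm_latE_le hx).1
      rw [Gr]
      exact Real.rpow_le_rpow_of_nonpos hlat hle (by linarith))
  rw [setIntegral_const, measureReal_def, hvol, ENNReal.toReal_one, one_smul, ← summand_eq'] at h
  exact h

lemma per_l_upper {z : ℝ} (hz : 0 < z) (l : {l : Fin 3 → ℤ // l ≠ 0})
    (h10 : 10 ≤ ‖latE l.1‖) :
    epsteinSummand z l ≤ ∫ x in cube l.1, gr z ‖x‖ := by
  have hvol : volume (cube l.1) = 1 := volume_cube l.1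
  have hconst : IntegrableOn (fun _ : EuclideanSpace ℝ (Fin 3) => ‖latE l.1‖ ^ (-(3+2*z)))
      (cube l.1) := by
    refine (integrableOn_const_iff).mpr (Or.inr ?_)
    rw [hvol]; exact ENNReal.one_lt_top
  have h := setIntegral_mono_on hconst ((integrable_g3 hz).integrableOn) (cube_measurable l.1)
    (fun x hx => by
      have hle := (norm_latE_le hx).2
      have hx9 : (9:ℝ) ≤ ‖x‖ := by linarith [(norm_latE_le hx).1]
      have hmax : max (‖x‖ - 1) 1 = ‖x‖ - 1 := max_eq_left (by linarith)
      rw [gr, hmax]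
      exact Real.rpow_le_rpow_of_nonpos (by linarith) (by linarith) (by linarith))
  rw [setIntegral_const, measureReal_def, hvol, ENNReal.toReal_one, one_smul, ← summand_eq'] at h
  exact h

/-- the indicator of the finite set of small lattice points -/
noncomputable def chi (l : {l : Fin 3 → ℤ // l ≠ 0}) : ℝ :=
  if ‖latE l.1‖ < 10 then 1 else 0

lemma finite_small : Set.Finite {l : Fin 3 → ℤ | ‖latE l‖ < 10} := by
  have hsub : {l : Fin 3 → ℤ | ‖latE l‖ < 10} ⊆
      Set.pi Set.univ fun _ : Fin 3 => Set.Icc (-10 : ℤ) 10 := by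
    intro l hl i _
    simp only [mem_setOf_eq] at hl
    have hS : ((l i : ℝ))^2 ≤ ∑ j : Fin 3, ((l j : ℝ))^2 :=
      Finset.single_le_sum (f := fun j => ((l j : ℝ))^2) (fun j _ => sq_nonneg _)
        (Finset.mem_univ i)
    have hn : ‖latE l‖^2 = ∑ j : Fin 3, ((l j : ℝ))^2 := by
      rw [norm_latE, Real.sq_sqrt (by positivity)]
    have h100 : ((l i : ℝ))^2 < 100 := by nlinarith [norm_latE l ▸ Real.sqrt_nonneg (∑ j : Fin 3, ((l j : ℝ))^2)]
    have habs : |(l i : ℝ)| < 10 := by nlinarith [abs_nonneg ((l i : ℝ)), sq_abs ((l i : ℝ))]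
    rw [← Int.cast_abs] at habs
    have : |l i| < 10 := by exact_mod_cast habs
    constructor <;> [linarith [abs_le.mp this.le] ; exact (abs_le.mp this.le).2]
  exact Set.Finite.subset (Set.Finite.pi fun _ => Set.finite_Icc _ _) hsub

lemma summable_chi : Summable chi := by
  have hfin : Set.Finite {l : {l : Fin 3 → ℤ // l ≠ 0} | ‖latE l.1‖ < 10} := by
    have := finite_small.preimage (f := fun l : {l : Fin 3 → ℤ // l ≠ 0} => l.1)
      (Set.injOn_of_injective Subtype.coe_injective)
    exact this
  refine summable_of_ne_finset_zero (s := hfin.toFinset) fun l hl => ?_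
  rw [chi, if_neg]
  intro hc
  exact hl (hfin.mem_toFinset.mpr hc)

/-- the constant counting small lattice points -/
noncomputable def cS : ℝ := ∑' l : {l : Fin 3 → ℤ // l ≠ 0}, chi l

lemma summand_le_mixed {z : ℝ} (hz : 0 < z) (l : {l : Fin 3 → ℤ // l ≠ 0}) :
    epsteinSummand z l ≤ chi l + ∫ x in cube l.1, gr z ‖x‖ := by
  by_cases h : ‖latE l.1‖ < 10
  · have h1 : epsteinSummand z l ≤ 1 := by
      rw [summand_eq']
      exact Real.rpow_le_one_of_one_le_of_nonpos (one_le_norm_latE l.2) (by linarith)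
    have h2 : (0:ℝ) ≤ ∫ x in cube l.1, gr z ‖x‖ :=
      setIntegral_nonneg (cube_measurable l.1) fun x _ => g_nonneg z ‖x‖
    rw [chi, if_pos h]
    linarith
  · rw [chi, if_neg h, zero_add]
    exact per_l_upper hz l (not_lt.mp h)

lemma summable_epstein {z : ℝ} (hz : 0 < z) :
    Summable fun l : {l : Fin 3 → ℤ // l ≠ 0} => epsteinSummand z l := by
  have hsumint : Summable (fun l : {l : Fin 3 → ℤ // l ≠ 0} => ∫ x in cube l.1, gr z ‖x‖) :=
    (hasSum_cubes _ (integrable_g3 hz)).summable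
  refine Summable.of_nonneg_of_le (fun l => ?_) (fun l => summand_le_mixed hz l)
    (summable_chi.add hsumint)
  rw [summand_eq']
  positivity

lemma epstein_upper {z : ℝ} (hz : 0 < z) :
    epsteinZeta z ≤ cS + ∫ x : EuclideanSpace ℝ (Fin 3), gr z ‖x‖ := by
  have hg3 := integrable_g3 hz
  have hsc := hasSum_cubes _ hg3
  have hsumint : Summable (fun l : {l : Fin 3 → ℤ // l ≠ 0} => ∫ x in cube l.1, gr z ‖x‖) :=
    hsc.summable
  have h1 : epsteinZeta z ≤ ∑' l : {l : Fin 3 → ℤ // l ≠ 0}, (chi l + ∫ x in cube l.1, gr z ‖x‖) :=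
    Summable.tsum_le_tsum (fun l => summand_le_mixed hz l) (summable_epstein hz)
      (summable_chi.add hsumint)
  rw [Summable.tsum_add summable_chi hsumint, hsc.tsum_eq] at h1
  have h2 : (∫ x in (cube 0)ᶜ, gr z ‖x‖) ≤ ∫ x : EuclideanSpace ℝ (Fin 3), gr z ‖x‖ :=
    setIntegral_le_integral hg3 (Filter.Eventually.of_forall fun x => g_nonneg z ‖x‖)
  calc epsteinZeta z ≤ cS + ∫ x in (cube 0)ᶜ, gr z ‖x‖ := h1
    _ ≤ cS + ∫ x : EuclideanSpace ℝ (Fin 3), gr z ‖x‖ := by linarith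

lemma epstein_lower {z : ℝ} (hz : 0 < z) :
    (∫ x : EuclideanSpace ℝ (Fin 3), Gr z ‖x‖) - 1 ≤ epsteinZeta z := by
  have hG3 := integrable_G3 hz
  have hsc := hasSum_cubes _ hG3
  have h1 : (∫ x in (cube 0)ᶜ, Gr z ‖x‖) ≤ epsteinZeta z := by
    rw [← hsc.tsum_eq]
    exact Summable.tsum_le_tsum (fun l => per_l_lower hz l) hsc.summable (summable_epstein hz)
  have h2 := integral_add_compl (cube_measurable 0) hG3
  have h3 : (∫ x in cube (0 : Fin 3 → ℤ), Gr z ‖x‖) ≤ 1 := by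
    have hconst : IntegrableOn (fun _ : EuclideanSpace ℝ (Fin 3) => (1:ℝ)) (cube 0) := by
      refine (integrableOn_const_iff).mpr (Or.inr ?_)
      rw [volume_cube]; exact ENNReal.one_lt_top
    have h := setIntegral_mono_on (hG3.integrableOn) hconst (cube_measurable 0)
      (fun x _ => G_le_one z ‖x‖ hz (norm_nonneg x))
    rwa [setIntegral_const, measureReal_def, volume_cube, ENNReal.toReal_one, one_smul] at h
  linarith

lemma zeta_lower {z : ℝ} (hz : 0 < z) :
    (4*π) * (1/(2*z) - (3+2*z)/(1+2*z)) - 1 ≤ epsteinZeta z := by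
  have h1 := epstein_lower hz
  rw [radial_eq (Gr z)] at h1
  have h2 := radial_G_lower hz
  have h3 := mul_le_mul_of_nonneg_left h2 (by positivity : (0:ℝ) ≤ 4*π)
  linarith

lemma zeta_upper {z : ℝ} (hz : 0 < z) (hz' : z ≤ 1/2) :
    epsteinZeta z ≤ cS + (4*π) * (512/3 + (8:ℝ)^(-(2*z))/(2*z) + 8) := by
  have h1 := epstein_upper hz
  rw [radial_eq (gr z)] at h1
  have h2 := radial_g_upper hz hz'
  have h3 := mul_le_mul_of_nonneg_left h2 (by positivity : (0:ℝ) ≤ 4*π)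
  linarith

lemma tendsto_lower :
    Filter.Tendsto (fun z : ℝ => z * ((4*π) * (1/(2*z) - (3+2*z)/(1+2*z)) - 1))
      (nhdsWithin 0 (Set.Ioi 0)) (nhds (2*π)) := by
  have hcont : ContinuousAt (fun z : ℝ => 2*π - (4*π) * (z*(3+2*z)/(1+2*z)) - z) 0 := by
    have hdiv : ContinuousAt (fun z : ℝ => z*(3+2*z)/(1+2*z)) 0 := by
      apply ContinuousAt.div
      · fun_prop
      · fun_prop
      · norm_num
    exact (continuousAt_const.sub (continuousAt_const.mul hdiv)).sub continuousAt_id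
  have hF : Filter.Tendsto (fun z : ℝ => 2*π - (4*π) * (z*(3+2*z)/(1+2*z)) - z)
      (nhds 0) (nhds (2*π)) := by
    have h0 := hcont.tendsto
    norm_num at h0
    exact h0
  refine Filter.Tendsto.congr' ?_ (hF.mono_left nhdsWithin_le_nhds)
  filter_upwards [self_mem_nhdsWithin] with z hz
  have hz0 : z ≠ 0 := ne_of_gt hz
  have h12 : (1+2*z) ≠ 0 := ne_of_gt (by simp only [Set.mem_Ioi] at hz; linarith)
  field_simp
  ring

lemma tendsto_upper :
    Filter.Tendsto (fun z : ℝ => z * (cS + (4*π) * (512/3 + (8:ℝ)^(-(2*z))/(2*z) + 8)))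
      (nhdsWithin 0 (Set.Ioi 0)) (nhds (2*π)) := by
  have hcont : Continuous (fun z : ℝ =>
      z*cS + (4*π) * (z*(512/3) + Real.exp (Real.log 8 * (-(2*z)))/2 + 8*z)) := by
    fun_prop
  have hF : Filter.Tendsto (fun z : ℝ =>
      z*cS + (4*π) * (z*(512/3) + Real.exp (Real.log 8 * (-(2*z)))/2 + 8*z))
      (nhds 0) (nhds (2*π)) := by
    have h0 := hcont.tendsto 0
    norm_num [Real.exp_zero] at h0
    convert h0 using 2
    · ring
    · ring
  refine Filter.Tendsto.congr' ?_ (hF.mono_left nhdsWithin_le_nhds)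
  filter_upwards [self_mem_nhdsWithin] with z hz
  simp only [Set.mem_Ioi] at hz
  have hz0 : z ≠ 0 := ne_of_gt hz
  have hexp : (8:ℝ)^(-(2*z)) = Real.exp (Real.log 8 * (-(2*z))) :=
    Real.rpow_def_of_pos (by norm_num) _
  rw [← hexp]
  field_simp

end EpsteinAux

theorem epsteinZeta_summable_and_residue_eq_two_pi :
    (∀ z : ℝ, 0 < z → Summable fun l : {l : Fin 3 → ℤ // l ≠ 0} => epsteinSummand z l) ∧
    Filter.Tendsto (fun z : ℝ => z * epsteinZeta z)
      (nhdsWithin 0 (Set.Ioi 0)) (nhds (2 * Real.pi)) := by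
  constructor
  · exact fun z hz => EpsteinAux.summable_epstein hz
  · refine tendsto_of_tendsto_of_tendsto_of_le_of_le' EpsteinAux.tendsto_lower
      EpsteinAux.tendsto_upper ?_ ?_
    · filter_upwards [self_mem_nhdsWithin] with z hz
      simp only [Set.mem_Ioi] at hz
      exact mul_le_mul_of_nonneg_left (EpsteinAux.zeta_lower hz) (le_of_lt hz)
    · filter_upwards [Ioc_mem_nhdsGT_of_mem (by constructor <;> norm_num :
        (0:ℝ) ∈ Set.Ico (0:ℝ) (1/2))] with z hz
      exact mul_le_mul_of_nonneg_left (EpsteinAux.zeta_upper hz.1 hz.2) (le_of_lt hz.1)
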